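/- With μ_n defined as the minimum over all functions f : F_2^n → {−1,1} of the maximum over a ∈ F_2^n of |f̂(a)|, where f̂(a) = 2^(−n/2) Σ_{y ∈ F_2^n} f(y)(−1)^(a·y), one has μ_{n+2} ≤ μ_n for every n ≥ 1. -/

import Mathlib

open Finset

noncomputable def fhat (n : ℕ) (f : (Fin n → ZMod 2) → ℝ) (a : Fin n → ZMod 2) : ℝ :=
  (2 : ℝ) ^ (-(n : ℝ) / 2) *
    ∑ y : Fin n → ZMod 2, f y * (-1 : ℝ) ^ (∑ i, a i * y i : ZMod 2).val

noncomputable def mu (n : ℕ) : ℝ :=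
  sInf {M : ℝ | ∃ f : (Fin n → ZMod 2) → ℝ, (∀ y, f y = 1 ∨ f y = -1) ∧
    M = Finset.univ.sup' Finset.univ_nonempty (fun a => |fhat n f a|)}

lemma val_two : ((2 : ZMod 2)).val = 0 := rfl
lemma val_one' : ((1 : ZMod 2)).val = 1 := rfl

lemma zmod2_sum (h : ZMod 2 → ℝ) : ∑ u : ZMod 2, h u = h 0 + h 1 :=
  Fin.sum_univ_two h

lemma zmod2_cases (x : ZMod 2) : x = 0 ∨ x = 1 := by revert x; decide

lemma neg_one_pow_add (x y : ZMod 2) :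
    (-1 : ℝ) ^ ((x + y).val) = (-1 : ℝ) ^ x.val * (-1 : ℝ) ^ y.val := by
  rcases zmod2_cases x with rfl | rfl <;> rcases zmod2_cases y with rfl | rfl <;> norm_num [val_two, val_one']

lemma four_sum (s t : ZMod 2) :
    ∑ c : Fin 2 → ZMod 2, (-1:ℝ) ^ ((c 0 * c 1).val) * (-1:ℝ) ^ ((s * c 0 + t * c 1).val)
      = 2 * (-1:ℝ) ^ ((s * t).val) := by
  rw [Fintype.sum_equiv (piFinTwoEquiv (fun _ => ZMod 2))
    _ (fun p : ZMod 2 × ZMod 2 => (-1:ℝ) ^ ((p.1 * p.2).val) * (-1:ℝ) ^ ((s * p.1 + t * p.2).val))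
    (fun c => by simp [piFinTwoEquiv])]
  rw [Fintype.sum_prod_type]
  rcases zmod2_cases s with rfl | rfl <;> rcases zmod2_cases t with rfl | rfl <;>
    simp [zmod2_sum, val_two, val_one'] <;> norm_num [val_two, val_one']

lemma key (n : ℕ) (f : (Fin n → ZMod 2) → ℝ) (a : Fin (n+2) → ZMod 2) :
    fhat (n+2) (fun z => f (fun i => z (Fin.castAdd 2 i)) *
        (-1:ℝ) ^ ((z (Fin.natAdd n 0) * z (Fin.natAdd n 1)).val)) a
      = (-1:ℝ) ^ ((a (Fin.natAdd n 0) * a (Fin.natAdd n 1)).val) *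
        fhat n f (fun i => a (Fin.castAdd 2 i)) := by
  unfold fhat
  rw [← Fintype.sum_equiv (Fin.appendEquiv n 2)
    (fun p : (Fin n → ZMod 2) × (Fin 2 → ZMod 2) =>
      (f p.1 * (-1:ℝ) ^ ((p.2 0 * p.2 1).val)) *
      ((-1:ℝ) ^ ((∑ i, a (Fin.castAdd 2 i) * p.1 i : ZMod 2).val) *
       (-1:ℝ) ^ ((a (Fin.natAdd n 0) * p.2 0 + a (Fin.natAdd n 1) * p.2 1 : ZMod 2).val)))
    (fun z => (f (fun i => z (Fin.castAdd 2 i)) *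
        (-1:ℝ) ^ ((z (Fin.natAdd n 0) * z (Fin.natAdd n 1)).val)) *
      (-1:ℝ) ^ ((∑ i, a i * z i : ZMod 2).val))
    (fun p => by
      simp only [Fin.appendEquiv, Equiv.coe_fn_mk, Fin.append_left, Fin.append_right]
      rw [Fin.sum_univ_add (f := fun i => a i * Fin.append p.1 p.2 i)]
      simp only [Fin.append_left, Fin.append_right, Fin.sum_univ_two]
      rw [neg_one_pow_add (∑ i, a (Fin.castAdd 2 i) * p.1 i)
        (a (Fin.natAdd n 0) * p.2 0 + a (Fin.natAdd n 1) * p.2 1)])]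
  rw [Fintype.sum_prod_type]
  have step : ∀ y : Fin n → ZMod 2,
      (∑ c : Fin 2 → ZMod 2, (f y * (-1:ℝ) ^ ((c 0 * c 1).val)) *
        ((-1:ℝ) ^ ((∑ i, a (Fin.castAdd 2 i) * y i : ZMod 2).val) *
         (-1:ℝ) ^ ((a (Fin.natAdd n 0) * c 0 + a (Fin.natAdd n 1) * c 1 : ZMod 2).val)))
      = (2 * (-1:ℝ) ^ ((a (Fin.natAdd n 0) * a (Fin.natAdd n 1)).val)) *
        (f y * (-1:ℝ) ^ ((∑ i, a (Fin.castAdd 2 i) * y i : ZMod 2).val)) := by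
    intro y
    have h4 := four_sum (a (Fin.natAdd n 0)) (a (Fin.natAdd n 1))
    calc (∑ c : Fin 2 → ZMod 2, (f y * (-1:ℝ) ^ ((c 0 * c 1).val)) *
        ((-1:ℝ) ^ ((∑ i, a (Fin.castAdd 2 i) * y i : ZMod 2).val) *
         (-1:ℝ) ^ ((a (Fin.natAdd n 0) * c 0 + a (Fin.natAdd n 1) * c 1 : ZMod 2).val)))
        = (f y * (-1:ℝ) ^ ((∑ i, a (Fin.castAdd 2 i) * y i : ZMod 2).val)) *
          ∑ c : Fin 2 → ZMod 2, (-1:ℝ) ^ ((c 0 * c 1).val) *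
            (-1:ℝ) ^ ((a (Fin.natAdd n 0) * c 0 + a (Fin.natAdd n 1) * c 1 : ZMod 2).val) := by
          rw [Finset.mul_sum]; exact Finset.sum_congr rfl (fun c _ => by ring)
      _ = _ := by rw [h4]; ring
  simp only [step]
  rw [← Finset.mul_sum]
  have hpow : (2:ℝ) ^ (-((n:ℝ)+2)/2) * 2 = (2:ℝ) ^ (-(n:ℝ)/2) := by
    calc (2:ℝ) ^ (-((n:ℝ)+2)/2) * 2
        = (2:ℝ) ^ (-((n:ℝ)+2)/2) * (2:ℝ) ^ (1:ℝ) := by rw [Real.rpow_one]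
      _ = (2:ℝ) ^ (-((n:ℝ)+2)/2 + 1) := (Real.rpow_add two_pos _ _).symm
      _ = (2:ℝ) ^ (-(n:ℝ)/2) := by congr 1; ring
  have hcast : (((n+2:ℕ)):ℝ) = (n:ℝ)+2 := by push_cast; ring
  rw [hcast, ← hpow]
  ring

lemma abs_key (n : ℕ) (f : (Fin n → ZMod 2) → ℝ) (a : Fin (n+2) → ZMod 2) :
    |fhat (n+2) (fun z => f (fun i => z (Fin.castAdd 2 i)) *
        (-1:ℝ) ^ ((z (Fin.natAdd n 0) * z (Fin.natAdd n 1)).val)) a|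
      = |fhat n f (fun i => a (Fin.castAdd 2 i))| := by
  rw [key, abs_mul, abs_pow, abs_neg, abs_one, one_pow, one_mul]

theorem mu_succ_succ_le (n : ℕ) (hn : 1 ≤ n) : mu (n + 2) ≤ mu n := by
  apply le_csInf
  · exact ⟨_, fun _ => (1:ℝ), fun y => Or.inl rfl, rfl⟩
  · rintro M ⟨f, hf, rfl⟩
    apply csInf_le
    · refine ⟨0, ?_⟩
      rintro x ⟨g, hg, rfl⟩
      exact le_trans (abs_nonneg _)
        (Finset.le_sup' (fun a => |fhat (n+2) g a|) (Finset.mem_univ (fun _ => (0:ZMod 2))))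
    · refine ⟨fun z => f (fun i => z (Fin.castAdd 2 i)) *
        (-1:ℝ) ^ ((z (Fin.natAdd n 0) * z (Fin.natAdd n 1)).val), ?_, ?_⟩
      · intro z
        have h1 : (-1:ℝ) ^ ((z (Fin.natAdd n 0) * z (Fin.natAdd n 1)).val) = 1 ∨
            (-1:ℝ) ^ ((z (Fin.natAdd n 0) * z (Fin.natAdd n 1)).val) = -1 := by
          rcases Nat.even_or_odd ((z (Fin.natAdd n 0) * z (Fin.natAdd n 1)).val) with h | h
          · exact Or.inl h.neg_one_pow
          · exact Or.inr h.neg_one_pow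
        rcases hf (fun i => z (Fin.castAdd 2 i)) with h2 | h2 <;> rcases h1 with h3 | h3 <;>
          simp only [h2, h3] <;> norm_num
      · apply le_antisymm
        · apply Finset.sup'_le
          intro b _
          have hb : |fhat n f b| = |fhat (n+2) (fun z => f (fun i => z (Fin.castAdd 2 i)) *
              (-1:ℝ) ^ ((z (Fin.natAdd n 0) * z (Fin.natAdd n 1)).val)) (Fin.append b 0)| := by
            rw [abs_key]
            congr 1
            congr 1
            funext i
            rw [Fin.append_left]
          rw [hb]
          exact Finset.le_sup' (fun a => |fhat (n+2) (fun z => f (fun i => z (Fin.castAdd 2 i)) *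
              (-1:ℝ) ^ ((z (Fin.natAdd n 0) * z (Fin.natAdd n 1)).val)) a|)
            (Finset.mem_univ (Fin.append b 0))
        · apply Finset.sup'_le
          intro a _
          rw [abs_key n f a]
          exact Finset.le_sup' (fun b => |fhat n f b|) (Finset.mem_univ _)
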